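/- The function f : ℝ → ℝ defined by f(x) = x + (x³/|x|)·|sin(1/x)| for x ≠ 0 and f(0) = 0 is Lipschitz near 0, Fréchet differentiable at 0 with f'(0) = 1, and open with a linear rate at 0 with lopen f(0) = 1, yet sur f(0) = 0, i.e. f is not metrically regular around (0,0). -/

import Mathlib

open Metric Set Filter Topology
open scoped ENNReal NNReal

noncomputable section

/-- The image of a set under a set-valued mapping. -/
def SVImage {X Y : Type*} (F : X → Set Y) (s : Set X) : Set Y := ⋃ x ∈ s, F x

/-- The modulus of openness (openness with a linear rate at a point). -/
def lopenMod {X Y : Type*} [PseudoMetricSpace X] [PseudoMetricSpace Y]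
    (F : X → Set Y) (xb : X) (yb : Y) : ℝ≥0∞ :=
  sSup (ENNReal.ofReal '' {c : ℝ | 0 < c ∧ ∃ ε > (0:ℝ), ∀ t ∈ Ioo (0:ℝ) ε,
    closedBall yb (c * t) ⊆ SVImage F (closedBall xb t)})

/-- The modulus of surjection (openness with a linear rate around a point). -/
def surMod {X Y : Type*} [PseudoMetricSpace X] [PseudoMetricSpace Y]
    (F : X → Set Y) (xb : X) (yb : Y) : ℝ≥0∞ :=
  sSup (ENNReal.ofReal '' {c : ℝ | 0 < c ∧ ∃ ε > (0:ℝ), ∃ U ∈ 𝓝 xb, ∃ V ∈ 𝓝 yb,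
    ∀ x ∈ U, ∀ y ∈ V, y ∈ F x → ∀ t ∈ Ioo (0:ℝ) ε,
      closedBall y (c * t) ⊆ SVImage F (closedBall x t)})

/-- The semiregularity modulus. -/
def semiregMod {X Y : Type*} [PseudoMetricSpace X] [PseudoMetricSpace Y]
    (F : X → Set Y) (xb : X) (yb : Y) : ℝ≥0∞ :=
  sInf (ENNReal.ofReal '' {κ : ℝ | 0 < κ ∧ ∃ V ∈ 𝓝 yb, ∀ y ∈ V,
    EMetric.infEdist xb {x | y ∈ F x} ≤ ENNReal.ofReal (κ * dist yb y)})

/-- The Lipschitz (Aubin) modulus of a set-valued mapping. -/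
def lipMod {X Y : Type*} [PseudoMetricSpace X] [PseudoMetricSpace Y]
    (G : X → Set Y) (xb : X) (zb : Y) : ℝ≥0∞ :=
  sInf (ENNReal.ofReal '' {μ : ℝ | 0 < μ ∧ ∃ U ∈ 𝓝 xb, ∃ V ∈ 𝓝 zb,
    ∀ x ∈ U, ∀ x' ∈ U, ∀ z ∈ G x' ∩ V,
      EMetric.infEdist z (G x) ≤ ENNReal.ofReal (μ * dist x x')})

/-- The calmness modulus of a single-valued mapping. -/
def calmMod {X Y : Type*} [PseudoMetricSpace X] [PseudoMetricSpace Y]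
    (f : X → Y) (xb : X) : ℝ≥0∞ :=
  sInf (ENNReal.ofReal '' {μ : ℝ | 0 < μ ∧ ∃ U ∈ 𝓝 xb, ∀ x ∈ U,
    dist (f x) (f xb) ≤ μ * dist x xb})

end

open scoped Classical in
/-- The function `f(x) = x + (x³/|x|)·|sin(1/x)|`, `f(0) = 0`. -/
noncomputable def fEx : ℝ → ℝ := fun x =>
  if x = 0 then 0 else x + (x ^ 3 / |x|) * |Real.sin (1 / x)|

/-- `fEx` is Lipschitz near `0`, differentiable at `0` with `fEx'(0) = 1`,
open with linear rate at `0` with `lopen fEx (0) = 1`, yet `sur fEx (0) = 0` (so `fEx` is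
not metrically regular around `(0,0)`). -/
lemma fEx_eq (x : ℝ) : fEx x = x + x * |x| * |Real.sin (1 / x)| := by
  unfold fEx
  split_ifs with h
  · simp [h]
  · have h3 : x ^ 3 / |x| = x * |x| := by
      rw [eq_comm, eq_div_iff (abs_ne_zero.mpr h), mul_assoc, ← sq, sq_abs]; ring
    rw [h3]

lemma fEx_zero : fEx 0 = 0 := by simp [fEx]

lemma msq (x y : ℝ) : abs (x * |x| - y * |y|) ≤ (|x| + |y|) * |x - y| := by
  rcases abs_cases x with ⟨h1, hx⟩ | ⟨h1, hx⟩ <;> rcases abs_cases y with ⟨h2, hy⟩ | ⟨h2, hy⟩ <;>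
    rcases abs_cases (x - y) with ⟨h3, h3s⟩ | ⟨h3, h3s⟩ <;> rw [h1, h2, h3] <;> rw [abs_le] <;> constructor <;>
    nlinarith [sq_nonneg (x - y), sq_nonneg (x + y)]

lemma gdiff (x y : ℝ) (hxy : |x| ≤ |y|) (hy1 : |y| ≤ 1) :
    abs (x * |x| * |Real.sin (1/x)| - y * |y| * |Real.sin (1/y)|) ≤ 3 * |x - y| := by
  by_cases hx : x = 0
  · subst hx
    simp only [abs_zero, mul_zero, zero_mul, zero_sub, abs_neg, zero_sub] at *
    have h1 : abs (y * |y| * |Real.sin (1/y)|) = |y| * |y| * |Real.sin (1/y)| := by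
      rw [abs_mul, abs_mul, abs_abs, abs_abs]
    rw [h1]
    nlinarith [abs_nonneg y, Real.abs_sin_le_one (1/y), abs_nonneg (Real.sin (1/y))]
  · have hy : y ≠ 0 := by
      intro h; apply hx; subst h
      exact abs_nonpos_iff.mp (by simpa using hxy)
    have hxa : (0:ℝ) < |x| := abs_pos.mpr hx
    have hya : (0:ℝ) < |y| := abs_pos.mpr hy
    set a := |Real.sin (1/x)| with ha
    set b := |Real.sin (1/y)| with hb
    have hb0 : 0 ≤ b := abs_nonneg _
    have hb1 : b ≤ 1 := Real.abs_sin_le_one _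
    have hab : |a - b| ≤ |x - y| / (|x| * |y|) := by
      have h2 : |Real.sin (1/x) - Real.sin (1/y)| ≤ |1/x - 1/y| := by
        have h4 : |Real.sin ((1/x - 1/y)/2)| ≤ |1/x - 1/y| / 2 := by
          simpa [abs_div, abs_two] using Real.abs_sin_le_abs (x := (1/x - 1/y)/2)
        have h5 := Real.abs_cos_le_one ((1/x + 1/y)/2)
        rw [Real.sin_sub_sin, abs_mul, abs_mul, abs_two]
        nlinarith [abs_nonneg (Real.sin ((1/x - 1/y)/2)), abs_nonneg (1/x - 1/y),
          abs_nonneg (Real.cos ((1/x + 1/y)/2))]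
      have h3 : |1/x - 1/y| = |x - y| / (|x| * |y|) := by
        rw [div_sub_div _ _ hx hy, abs_div, abs_mul, one_mul, mul_one, abs_sub_comm]
      calc |a - b| ≤ |Real.sin (1/x) - Real.sin (1/y)| := abs_abs_sub_abs_le_abs_sub _ _
        _ ≤ |1/x - 1/y| := h2
        _ = |x - y| / (|x| * |y|) := h3
    have key : x * |x| * a - y * |y| * b = x * |x| * (a - b) + (x * |x| - y * |y|) * b := by ring
    have bound1 : abs (x * |x| * (a - b)) ≤ |x - y| := by
      have e1 : abs (x * |x| * (a - b)) = |x| * |x| * |a - b| := by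
        rw [abs_mul, abs_mul, abs_abs]
      rw [e1]
      calc |x| * |x| * |a - b| ≤ |x| * |x| * (|x - y| / (|x| * |y|)) := by
            apply mul_le_mul_of_nonneg_left hab (by positivity)
        _ = (|x| / |y|) * |x - y| := by field_simp
        _ ≤ 1 * |x - y| := by
            apply mul_le_mul_of_nonneg_right _ (abs_nonneg _)
            rw [div_le_one hya]; exact hxy
        _ = |x - y| := one_mul _
    have bound2 : abs ((x * |x| - y * |y|) * b) ≤ 2 * |x - y| := by
      rw [abs_mul, abs_abs]
      calc abs (x * |x| - y * |y|) * b ≤ ((|x| + |y|) * |x - y|) * 1 :=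
            mul_le_mul (msq x y) hb1 hb0 (by positivity)
        _ ≤ 2 * |x - y| := by nlinarith [abs_nonneg (x - y)]
    calc abs (x * |x| * a - y * |y| * b)
        ≤ abs (x * |x| * (a - b)) + abs ((x * |x| - y * |y|) * b) := key ▸ abs_add_le _ _
      _ ≤ |x - y| + 2 * |x - y| := add_le_add bound1 bound2
      _ = 3 * |x - y| := by ring

lemma fEx_lip : LipschitzOnWith 4 fEx (ball (0:ℝ) 1) := by
  apply LipschitzOnWith.of_dist_le_mul
  intro x hx y hy
  simp only [mem_ball, Real.dist_eq, sub_zero] at hx hy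
  rw [Real.dist_eq, Real.dist_eq, fEx_eq, fEx_eq]
  have h3 : abs (x * |x| * |Real.sin (1/x)| - y * |y| * |Real.sin (1/y)|) ≤ 3 * |x - y| := by
    rcases le_total |x| |y| with h | h
    · exact gdiff x y h hy.le
    · rw [abs_sub_comm]
      calc abs (y * |y| * |Real.sin (1/y)| - x * |x| * |Real.sin (1/x)|) ≤ 3 * |y - x| :=
            gdiff y x h hx.le
        _ = 3 * |x - y| := by rw [abs_sub_comm]
  have e : x + x * |x| * |Real.sin (1/x)| - (y + y * |y| * |Real.sin (1/y)|)
      = (x - y) + (x * |x| * |Real.sin (1/x)| - y * |y| * |Real.sin (1/y)|) := by ring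
  rw [e]
  have : abs ((x - y) + (x * |x| * |Real.sin (1/x)| - y * |y| * |Real.sin (1/y)|))
      ≤ |x - y| + 3 * |x - y| := le_trans (abs_add_le _ _) (by linarith)
  refine this.trans ?_
  push_cast
  linarith

lemma fEx_deriv : HasDerivAt fEx 1 0 := by
  rw [hasDerivAt_iff_isLittleO]
  have e : (fun x' : ℝ => fEx x' - fEx 0 - (x' - 0) • (1:ℝ))
      = fun x' => x' * |x'| * |Real.sin (1/x')| := by
    funext x; rw [fEx_eq, fEx_zero]; simp
  rw [e, Asymptotics.isLittleO_iff]
  intro c hc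
  filter_upwards [Metric.ball_mem_nhds (0:ℝ) hc] with x hx
  simp only [mem_ball, Real.dist_eq, sub_zero] at hx
  have h1 : ‖x * |x| * |Real.sin (1/x)|‖ = |x| * |x| * |Real.sin (1/x)| := by
    rw [Real.norm_eq_abs, abs_mul, abs_mul, abs_abs, abs_abs]
  rw [h1, Real.norm_eq_abs, sub_zero]
  nlinarith [abs_nonneg x, Real.abs_sin_le_one (1/x), abs_nonneg (Real.sin (1/x))]

lemma fEx_cont : Continuous fEx := by
  have hg : Continuous fun x : ℝ => x * |x| * |Real.sin (1/x)| := by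
    rw [continuous_iff_continuousAt]
    intro x
    by_cases hx : x = 0
    · subst hx
      rw [ContinuousAt]
      have h0 : (0:ℝ) * |(0:ℝ)| * |Real.sin (1/(0:ℝ))| = 0 := by simp
      rw [h0]
      apply squeeze_zero_norm (a := fun x : ℝ => |x| * |x|)
      · intro x
        have h1 : ‖x * |x| * |Real.sin (1/x)|‖ = |x| * |x| * |Real.sin (1/x)| := by
          rw [Real.norm_eq_abs, abs_mul, abs_mul, abs_abs, abs_abs]
        rw [h1]
        nlinarith [abs_nonneg x, Real.abs_sin_le_one (1/x), abs_nonneg (Real.sin (1/x))]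
      · have : Filter.Tendsto (fun x : ℝ => |x| * |x|) (nhds 0) (nhds (|(0:ℝ)| * |(0:ℝ)|)) :=
          (continuous_abs.mul continuous_abs).tendsto 0
        simpa using this
    · exact (continuousAt_id.mul continuous_abs.continuousAt).mul
        ((Real.continuous_sin.continuousAt.comp
          (continuousAt_const.div continuousAt_id hx)).abs)
  have e : fEx = fun x => x + x * |x| * |Real.sin (1/x)| := funext fEx_eq
  rw [e]; exact continuous_id.add hg


lemma svimage_eq (s : Set ℝ) : SVImage (fun x : ℝ => {fEx x}) s = fEx '' s := by
  ext z; simp [SVImage, eq_comm]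

lemma lopen_ge : (1:ℝ≥0∞) ≤ lopenMod (fun x : ℝ => {fEx x}) 0 (fEx 0) := by
  have h1 : ENNReal.ofReal 1 ≤ lopenMod (fun x : ℝ => {fEx x}) 0 (fEx 0) := by
    apply le_sSup
    refine ⟨1, ⟨one_pos, 1, one_pos, ?_⟩, rfl⟩
    intro t ht z hz
    rw [svimage_eq, Real.closedBall_eq_Icc]
    have hIcc : Icc (fEx (-t)) (fEx t) ⊆ fEx '' Icc (-t) t :=
      intermediate_value_Icc (by linarith [ht.1]) fEx_cont.continuousOn
    rw [zero_sub, zero_add]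
    apply hIcc
    simp only [mem_closedBall, Real.dist_eq, fEx_zero, sub_zero, one_mul] at hz
    have hz' := abs_le.mp hz
    have hft : t ≤ fEx t := by
      rw [fEx_eq]
      have : 0 ≤ t * |t| * |Real.sin (1/t)| :=
        mul_nonneg (mul_nonneg ht.1.le (abs_nonneg t)) (abs_nonneg _)
      linarith
    have hfmt : fEx (-t) ≤ -t := by
      rw [fEx_eq]
      have habs : |(-t)| = t := by rw [abs_neg, abs_of_pos ht.1]
      rw [habs]
      nlinarith [abs_nonneg (Real.sin (1/(-t))), ht.1, mul_nonneg (mul_nonneg ht.1.le ht.1.le) (abs_nonneg (Real.sin (1/(-t))))]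
    exact ⟨le_trans hfmt hz'.1, le_trans hz'.2 hft⟩
  simpa using h1

lemma lopen_le : lopenMod (fun x : ℝ => {fEx x}) 0 (fEx 0) ≤ 1 := by
  apply sSup_le
  rintro b ⟨c, ⟨hc, ε, hε, hsub⟩, rfl⟩
  rw [ENNReal.ofReal_le_one]
  by_contra hlt
  push_neg at hlt
  set t := min (ε/2) ((c-1)/2) with htdef
  have ht0 : 0 < t := by
    apply lt_min (by linarith) (by linarith)
  have htε : t < ε := lt_of_le_of_lt (min_le_left _ _) (by linarith)
  have htc : t < c - 1 := lt_of_le_of_lt (min_le_right _ _) (by linarith)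
  have hmem : c * t ∈ closedBall (fEx 0) (c * t) := by
    rw [mem_closedBall, fEx_zero, Real.dist_eq, sub_zero,
      abs_of_nonneg (by positivity : (0:ℝ) ≤ c * t)]
  have := hsub t ⟨ht0, htε⟩ hmem
  rw [svimage_eq, Real.closedBall_eq_Icc] at this
  obtain ⟨y, hy, hfy⟩ := this
  simp only [zero_sub, zero_add, mem_Icc] at hy
  have hbnd : fEx y ≤ t + t * t := by
    rw [fEx_eq]
    have h1 : |y| ≤ t := abs_le.mpr hy
    have hs0 : 0 ≤ |Real.sin (1/y)| := abs_nonneg _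
    have hs1 : |Real.sin (1/y)| ≤ 1 := Real.abs_sin_le_one _
    have h2 : y * |y| * |Real.sin (1/y)| ≤ t * t := by
      calc y * |y| * |Real.sin (1/y)| ≤ |y| * |y| * |Real.sin (1/y)| :=
            mul_le_mul_of_nonneg_right
              (mul_le_mul_of_nonneg_right (le_abs_self y) (abs_nonneg y)) hs0
        _ ≤ t * t * 1 :=
            mul_le_mul (mul_le_mul h1 h1 (abs_nonneg y) (le_trans (abs_nonneg y) h1)) hs1 hs0
              (by nlinarith [abs_nonneg y])
        _ = t * t := mul_one _
    linarith [hy.2]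
  nlinarith [hfy ▸ hbnd]

lemma arith_main (c x y u su : ℝ) (hc : 0 < c) (hx0 : 0 < x) (hxh : x < 1/2)
    (hxc : x < c/2) (hy : 0 < y) (hyx : y < x) (hyt : x - y ≤ x^3)
    (e1 : u * (y * x) = x - y) (hu0 : 0 < u) (hu1 : u ≤ 1)
    (hsin : u - u^3/4 < su) :
    x - c * x^3 < y + y * y * su := by
  have hxx : x*x < (1/2)*x := mul_lt_mul_of_pos_right hxh hx0
  have hx4 : x^3 < x/2 := by nlinarith [mul_lt_mul_of_pos_right hxx hx0]
  have hy_lb : x/2 ≤ y := by linarith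
  have hu2 : u ≤ 2*x := by
    have h6 : x^3 ≤ 2*x*(y*x) := by nlinarith [mul_le_mul_of_nonneg_right hy_lb hx0.le]
    have h5 : u * (y*x) ≤ 2*x * (y*x) := by rw [e1]; linarith
    exact le_of_mul_le_mul_right h5 (mul_pos hy hx0)
  have husq : u*u ≤ 4*(x*x) := by nlinarith
  have h9 : 0 ≤ u * (4*(x*x) - u*u) := mul_nonneg hu0.le (by linarith)
  have hs2 : u*(1 - x^2) ≤ su := by nlinarith
  have q1 : y * y * (u * (1 - x^2)) ≤ y * y * su :=
    mul_le_mul_of_nonneg_left hs2 (by positivity)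
  have q2 : y * y * (u * (1 - x^2)) * x = y * (1 - x^2) * (x - y) := by
    rw [← e1]; ring
  have hB : x^2*(x - y) ≤ y*(1-x^2) - x*(1-2*x^2) := by nlinarith
  have q3 : (x - y)*(1 - 2*x^2)*x ≤ y * (1 - x^2) * (x - y) := by
    nlinarith [mul_nonneg (sub_nonneg.mpr hyx.le)
      (le_trans (mul_nonneg (sq_nonneg x) (sub_nonneg.mpr hyx.le)) hB)]
  have q4 : (x - y)*(1 - 2*x^2)*x ≤ y*y*su * x := by
    calc (x - y)*(1 - 2*x^2)*x ≤ y * (1 - x^2) * (x - y) := q3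
      _ = y * y * (u * (1 - x^2)) * x := q2.symm
      _ ≤ y * y * su * x := mul_le_mul_of_nonneg_right q1 hx0.le
  have hkey : (x - y)*(1 - 2*x^2) ≤ y*y*su := le_of_mul_le_mul_right q4 hx0
  have h2x : 2*x^2 < c := by nlinarith
  have h7 : (x - y)*(2*x^2) ≤ x^3*(2*x^2) :=
    mul_le_mul_of_nonneg_right hyt (by positivity)
  nlinarith [hkey, h7, mul_pos (show (0:ℝ) < x^3 by positivity) (sub_pos.mpr h2x)]

lemma sur_empty : ∀ c : ℝ, ¬ (0 < c ∧ ∃ ε > (0:ℝ), ∃ U ∈ 𝓝 (0:ℝ), ∃ V ∈ 𝓝 (fEx 0),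
    ∀ x ∈ U, ∀ y ∈ V, y ∈ ({fEx x} : Set ℝ) → ∀ t ∈ Ioo (0:ℝ) ε,
      closedBall y (c * t) ⊆ SVImage (fun x : ℝ => {fEx x}) (closedBall x t)) := by
  rintro c ⟨hc, ε, hε, U, hU, V, hV, H⟩
  rw [fEx_zero] at hV
  obtain ⟨δ, hδ0, hδU⟩ := Metric.mem_nhds_iff.mp hU
  obtain ⟨δ', hδ'0, hδV⟩ := Metric.mem_nhds_iff.mp hV
  have hπ := Real.pi_pos
  obtain ⟨m, hm⟩ : ∃ m : ℝ, m = min (min δ δ') (min (min ε (c/2)) (1/2)) := ⟨_, rfl⟩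
  have hm0 : 0 < m := by
    rw [hm]; positivity
  obtain ⟨k, hk⟩ := exists_nat_gt (1/(Real.pi * m))
  have hk0 : 0 < (k:ℝ) := lt_of_le_of_lt (by positivity) hk
  obtain ⟨x₀, hx0def⟩ : ∃ x₀ : ℝ, x₀ = ((k:ℝ) * Real.pi)⁻¹ := ⟨_, rfl⟩
  have hx0 : 0 < x₀ := by rw [hx0def]; positivity
  have h1 : (1:ℝ) < (k:ℝ) * (Real.pi * m) := (div_lt_iff₀ (by positivity)).mp hk
  have hx0m : x₀ < m := by
    rw [hx0def, inv_lt_comm₀ (by positivity) hm0]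
    calc m⁻¹ = 1/m := (one_div m).symm
      _ < (k:ℝ) * Real.pi := by rw [div_lt_iff₀ hm0]; nlinarith
  have hmδ : m ≤ δ := hm ▸ le_trans (min_le_left _ _) (min_le_left _ _)
  have hmδ' : m ≤ δ' := hm ▸ le_trans (min_le_left _ _) (min_le_right _ _)
  have hmε : m ≤ ε := hm ▸ le_trans (min_le_right _ _)
    (le_trans (min_le_left _ _) (min_le_left _ _))
  have hmc : m ≤ c/2 := hm ▸ le_trans (min_le_right _ _)
    (le_trans (min_le_left _ _) (min_le_right _ _))
  have hmhalf : m ≤ 1/2 := hm ▸ le_trans (min_le_right _ _) (min_le_right _ _)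
  have hx0half : x₀ < 1/2 := lt_of_lt_of_le hx0m hmhalf
  have hkπ : (k:ℝ) * Real.pi = x₀⁻¹ := by rw [hx0def, inv_inv]
  have hfx0 : fEx x₀ = x₀ := by
    rw [fEx_eq]
    have h1x : 1 / x₀ = (k:ℝ) * Real.pi := by rw [hx0def, one_div, inv_inv]
    rw [h1x, Real.sin_nat_mul_pi]
    simp
  have hxU : x₀ ∈ U := by
    apply hδU
    rw [mem_ball, Real.dist_eq, sub_zero, abs_of_pos hx0]
    linarith
  have hxV : x₀ ∈ V := by
    apply hδV
    rw [mem_ball, Real.dist_eq, sub_zero, abs_of_pos hx0]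
    linarith
  have hxx : x₀*x₀ < (1/2)*x₀ := mul_lt_mul_of_pos_right hx0half hx0
  have hxxx : (x₀*x₀)*x₀ < ((1/2)*x₀)*x₀ := mul_lt_mul_of_pos_right hxx hx0
  have hx4 : x₀^3 < x₀/2 := by
    have h2 : ((1/2)*x₀)*x₀ = (1/2)*(x₀*x₀) := by ring
    have h3 : x₀^3 = (x₀*x₀)*x₀ := by ring
    rw [h3]
    rw [h2] at hxxx
    linarith
  have hx3 : x₀^3 < x₀ := by linarith
  obtain ⟨t, htdef⟩ : ∃ t : ℝ, t = x₀^3 := ⟨_, rfl⟩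
  have ht0 : 0 < t := by rw [htdef]; positivity
  have htε : t < ε := by rw [htdef]; linarith
  have key := H x₀ hxU x₀ hxV (mem_singleton_iff.mpr hfx0.symm) t ⟨ht0, htε⟩
  have hpt : x₀ - c*t ∈ closedBall x₀ (c*t) := by
    have e : (x₀ - c*t) - x₀ = -(c*t) := by ring
    rw [mem_closedBall, Real.dist_eq, e, abs_neg, abs_of_nonneg (by positivity)]
  have himg := key hpt
  rw [svimage_eq, Real.closedBall_eq_Icc] at himg
  obtain ⟨y, hy, hfy⟩ := himg
  obtain ⟨hy1, hy2⟩ := hy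
  have hypos : 0 < y := by
    have h5 : x₀ - t ≤ y := hy1
    rw [htdef] at h5
    linarith
  clear key hpt H hδU hδV hU hV hxU hxV hk h1
  have hgoal : x₀ - c*t < fEx y := by
    rcases le_or_gt x₀ y with hcase | hcase
    · rw [fEx_eq]
      have hnn : 0 ≤ y * |y| * |Real.sin (1/y)| :=
        mul_nonneg (mul_nonneg hypos.le (abs_nonneg y)) (abs_nonneg _)
      have hct : 0 < c * t := mul_pos hc ht0
      linarith
    · obtain ⟨u, hudef⟩ : ∃ u : ℝ, u = 1/y - (k:ℝ)*Real.pi := ⟨_, rfl⟩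
      have e1 : u * (y * x₀) = x₀ - y := by
        rw [hudef, hkπ]
        field_simp
      have hu0 : 0 < u := by
        have hpos : 0 < u * (y * x₀) := by rw [e1]; linarith
        rcases mul_pos_iff.mp hpos with ⟨h6, -⟩ | ⟨-, h7⟩
        · exact h6
        · exact absurd (mul_pos hypos hx0) (by linarith)
      have hyt : x₀ - y ≤ t := by linarith
      rw [htdef] at hyt
      have hy_lb : x₀/2 ≤ y := by linarith
      have hu2 : u ≤ 2*x₀ := by
        have h6 : x₀^3 ≤ 2*x₀*(y*x₀) := by
          nlinarith [mul_le_mul_of_nonneg_right hy_lb hx0.le]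
        have h5 : u * (y*x₀) ≤ 2*x₀ * (y*x₀) := by rw [e1]; linarith
        exact le_of_mul_le_mul_right h5 (mul_pos hypos hx0)
      have hu1 : u ≤ 1 := by linarith
      have hsin_eq : |Real.sin (1/y)| = Real.sin u := by
        have h1y : 1/y = u + (k:ℝ)*Real.pi := by rw [hudef]; ring
        rw [h1y, Real.sin_add, Real.sin_nat_mul_pi, mul_zero, add_zero, abs_mul]
        have hcos : |Real.cos ((k:ℝ)*Real.pi)| = 1 := by
          have h8 := Real.sin_sq_add_cos_sq ((k:ℝ)*Real.pi)
          rw [Real.sin_nat_mul_pi] at h8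
          norm_num at h8
          rcases h8 with h3 | h3 <;> rw [h3] <;> norm_num
        rw [hcos, mul_one, abs_of_nonneg (Real.sin_nonneg_of_nonneg_of_le_pi hu0.le
          (le_trans hu1 (by linarith [Real.pi_gt_three])))]
      have hsin_lb : u - u^3/4 < Real.sin u := by
        have := Real.sin_gt_sub_cube hu0; linarith [pow_pos hu0 3]
      rw [fEx_eq, hsin_eq, abs_of_pos hypos, htdef]
      exact arith_main c x₀ y u (Real.sin u) hc hx0 hx0half (by linarith) hypos hcase
        hyt e1 hu0 hu1 hsin_lb
  rw [hfy] at hgoal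
  exact lt_irrefl _ hgoal

lemma sur_zero : surMod (fun x : ℝ => {fEx x}) 0 (fEx 0) = 0 := by
  unfold surMod
  have hset : {c : ℝ | 0 < c ∧ ∃ ε > (0:ℝ), ∃ U ∈ 𝓝 (0:ℝ), ∃ V ∈ 𝓝 (fEx 0),
      ∀ x ∈ U, ∀ y ∈ V, y ∈ ({fEx x} : Set ℝ) → ∀ t ∈ Ioo (0:ℝ) ε,
        closedBall y (c * t) ⊆ SVImage (fun x : ℝ => {fEx x}) (closedBall x t)} = ∅ :=
    eq_empty_iff_forall_notMem.mpr sur_empty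
  rw [hset, image_empty, sSup_empty]
  rfl

theorem example_lopen_pos_sur_zero :
    (∃ ε > (0:ℝ), ∃ K : ℝ≥0, LipschitzOnWith K fEx (ball (0:ℝ) ε)) ∧
    HasDerivAt fEx 1 0 ∧
    lopenMod (fun x : ℝ => {fEx x}) 0 (fEx 0) = 1 ∧
    surMod (fun x : ℝ => {fEx x}) 0 (fEx 0) = 0 := by
  refine ⟨⟨1, one_pos, 4, fEx_lip⟩, fEx_deriv, le_antisymm lopen_le lopen_ge, sur_zero⟩
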